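/- Define R₀ = R > 0 and sequences k₀ = k ∈ (0,1), R_{j+1} = R_j/k_j, k_{j+1} determined by √(1−k_{j+1}²) = (1−k_j)/(1+k_j). Then for all n ≥ 1, R_n/R_{n+1} = √(R_{n−1}R_n) / ((R_{n−1}+R_n)/2). -/
import Mathlib


theorem lemaitre_radii_recursion (R : ℝ) (hR : 0 < R)
    (k : ℕ → ℝ) (Rs : ℕ → ℝ)
    (hR0 : Rs 0 = R)
    (hk : ∀ j, k j ∈ Set.Ioo (0:ℝ) 1)
    (hRs : ∀ j, Rs (j + 1) = Rs j / k j)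
    (hkrec : ∀ j, Real.sqrt (1 - (k (j + 1)) ^ 2) = (1 - k j) / (1 + k j)) :
    ∀ n : ℕ, 1 ≤ n →
      Rs n / Rs (n + 1) =
        Real.sqrt (Rs (n - 1) * Rs n) / ((Rs (n - 1) + Rs n) / 2) := by
  have hkpos : ∀ j, 0 < k j := fun j => (hk j).1
  have hklt : ∀ j, k j < 1 := fun j => (hk j).2
  have hRpos : ∀ j, 0 < Rs j := by
    intro j
    induction j with
    | zero => rw [hR0]; exact hR
    | succ m ih => rw [hRs m]; exact div_pos ih (hkpos m)
  rintro (_|m) hn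
  · omega
  · simp only [Nat.add_sub_cancel]
    have hkm := hkpos m
    have hkm1 := hklt m
    have h1k : (0:ℝ) < 1 + k m := by linarith
    -- k (m+1) = 2 * sqrt (k m) / (1 + k m)
    have hsq : (k (m+1))^2 = 4 * k m / (1 + k m)^2 := by
      have := hkrec m
      have h2 : 1 - (k (m+1))^2 = ((1 - k m)/(1 + k m))^2 := by
        have h := hkrec m
        have hnn : 0 ≤ 1 - (k (m+1))^2 := by nlinarith [hkpos (m+1), hklt (m+1)]
        rw [← h, Real.sq_sqrt hnn]
      field_simp at h2 ⊢
      nlinarith [h2]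
    have hksqrt : k (m+1) = 2 * Real.sqrt (k m) / (1 + k m) := by
      have hpos : 0 < k (m+1) := hkpos (m+1)
      have h2 : (k (m+1))^2 = (2 * Real.sqrt (k m) / (1 + k m))^2 := by
        rw [hsq]
        rw [div_pow, mul_pow, Real.sq_sqrt hkm.le]
        ring
      have hnn2 : 0 ≤ 2 * Real.sqrt (k m) / (1 + k m) :=
        div_nonneg (by positivity) h1k.le
      nlinarith [h2, hpos, hnn2]
    -- Rs m = k m * Rs (m+1)
    have hRm : Rs m = k m * Rs (m+1) := by
      rw [hRs m]; field_simp
    have hLHS : Rs (m+1) / Rs (m+1+1) = k (m+1) := by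
      rw [hRs (m+1)]
      field_simp
      rw [mul_comm, mul_div_assoc, div_self (hRpos (m+1)).ne', mul_one]
    rw [hLHS, hRm]
    have hRp := hRpos (m+1)
    rw [show k m * Rs (m+1) * Rs (m+1) = (k m) * (Rs (m+1))^2 by ring,
      Real.sqrt_mul hkm.le, Real.sqrt_sq hRp.le, hksqrt]
    field_simp
    ring
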